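/- For probability densities p and q on a measure space with p, q > 0 a.e., the function D(x) = q(x)/(p(x)+q(x)) maximizes the functional U(D) = ∫ p(x)·log(1 − D(x)) + q(x)·log D(x) dx over measurable functions D with values in (0,1). -/

import Mathlib

open MeasureTheory Real

lemma pointwise_opt (a b t : ℝ) (ha : 0 < a) (hb : 0 < b) (ht0 : 0 < t) (ht1 : t < 1) :
    a * Real.log (1 - t) + b * Real.log t ≤
      a * Real.log (1 - b / (a + b)) + b * Real.log (b / (a + b)) := by
  have hab : 0 < a + b := by linarith
  have h1 : 1 - b / (a + b) = a / (a + b) := by field_simp; ring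
  rw [h1]
  have h1t : 0 < 1 - t := by linarith
  have h2 := Real.log_le_sub_one_of_pos (show 0 < (1 - t) * (a + b) / a by positivity)
  have h3 := Real.log_le_sub_one_of_pos (show 0 < t * (a + b) / b by positivity)
  have e2 : Real.log ((1 - t) * (a + b) / a) = Real.log (1 - t) - Real.log (a / (a + b)) := by
    rw [Real.log_div (by positivity) ha.ne', Real.log_mul h1t.ne' hab.ne',
      Real.log_div ha.ne' hab.ne']
    ring
  have e3 : Real.log (t * (a + b) / b) = Real.log t - Real.log (b / (a + b)) := by
    rw [Real.log_div (by positivity) hb.ne', Real.log_mul ht0.ne' hab.ne',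
      Real.log_div hb.ne' hab.ne']
    ring
  rw [e2] at h2
  rw [e3] at h3
  have h2' : a * (Real.log (1 - t) - Real.log (a / (a + b))) ≤ (1 - t) * (a + b) - a := by
    have := mul_le_mul_of_nonneg_left h2 ha.le
    calc a * (Real.log (1 - t) - Real.log (a / (a + b))) ≤ a * ((1 - t) * (a + b) / a - 1) := this
      _ = (1 - t) * (a + b) - a := by field_simp
  have h3' : b * (Real.log t - Real.log (b / (a + b))) ≤ t * (a + b) - b := by
    have := mul_le_mul_of_nonneg_left h3 hb.le
    calc b * (Real.log t - Real.log (b / (a + b))) ≤ b * (t * (a + b) / b - 1) := this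
      _ = t * (a + b) - b := by field_simp
  nlinarith [h2', h3']

/-- The optimal GAN discriminator: for probability densities `p`, `q` (positive a.e.),
`D*(x) = q x / (p x + q x)` maximizes `U(D) = ∫ p·log(1−D) + q·log D dμ`
over measurable functions `D` with values in `(0,1)`. -/
theorem optimal_discriminator
    {X : Type*} [MeasurableSpace X] (μ : Measure X)
    (p q : X → ℝ) (hpm : Measurable p) (hqm : Measurable q)
    (hp0 : ∀ᵐ x ∂μ, 0 < p x) (hq0 : ∀ᵐ x ∂μ, 0 < q x)
    (hp1 : ∫ x, p x ∂μ = 1) (hq1 : ∫ x, q x ∂μ = 1)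
    (hIstar : Integrable (fun x =>
        p x * Real.log (1 - q x / (p x + q x)) + q x * Real.log (q x / (p x + q x))) μ)
    (D : X → ℝ) (hD : Measurable D) (hD01 : ∀ x, D x ∈ Set.Ioo (0 : ℝ) 1)
    (hID : Integrable (fun x => p x * Real.log (1 - D x) + q x * Real.log (D x)) μ) :
    ∫ x, (p x * Real.log (1 - D x) + q x * Real.log (D x)) ∂μ ≤
      ∫ x, (p x * Real.log (1 - q x / (p x + q x)) +
            q x * Real.log (q x / (p x + q x))) ∂μ := by
  refine integral_mono_ae hID hIstar ?_
  filter_upwards [hp0, hq0] with x hp hq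
  exact pointwise_opt (p x) (q x) (D x) hp hq (hD01 x).1 (hD01 x).2
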